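/- (Stationary UL Cholesky of Schur complements of a positive Toeplitz operator.) Let T_Q = (Q_{i-j})_{i,j≥0} ≥ 0 on ℓ²_H(ℕ₀). Then there exist operators F_0, F_1, F_2, … with F_i : H → closure(ran F_0) ⊆ H such that for every m ≥ 0, the Schur complement S(m) of T_Q on {0,…,m} factors as S(m) = L_m* L_m, where L_m is the (m+1)×(m+1) lower triangular Toeplitz matrix with F_0 on the diagonal, F_1 on the first subdiagonal, …, F_m in the lower-left corner. -/

import Mathlib

open scoped InnerProductSpace
open ContinuousLinearMap

set_option maxHeartbeats 1000000
set_option synthInstance.maxHeartbeats 400000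
set_option linter.unusedSectionVars false

section

variable {H : Type*} [NormedAddCommGroup H] [InnerProductSpace ℂ H] [CompleteSpace H]

/-- The quadratic form of the block Toeplitz matrix `(Q_{i-j})_{i,j≥0}` on vectors
supported in `{0,…,N-1}`. -/
noncomputable def toepQF (Q : ℤ → H →L[ℂ] H) (N : ℕ) (v : ℕ → H) : ℝ :=
  ∑ i ∈ Finset.range N, ∑ j ∈ Finset.range N, (⟪Q ((i : ℤ) - (j : ℤ)) (v j), v i⟫_ℂ).re

/-- The block Toeplitz matrix `(Q_{i-j})_{i,j≥0}` is (hermitian and) positive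
semidefinite on finitely supported sequences. -/
def ToepPos (Q : ℤ → H →L[ℂ] H) : Prop :=
  (∀ k : ℤ, Q (-k) = (Q k).adjoint) ∧ ∀ N v, 0 ≤ toepQF Q N v

/-- The quadratic form of a block matrix supported on `{0,…,m} × {0,…,m}`. -/
noncomputable def schurQF (m : ℕ) (S : ℕ → ℕ → H →L[ℂ] H) (v : ℕ → H) : ℝ :=
  ∑ i ∈ Finset.range (m + 1), ∑ j ∈ Finset.range (m + 1), (⟪S i j (v j), v i⟫_ℂ).re

/-- `S` is the Schur complement `S(m)` of the positive Toeplitz operator `T_Q` supported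
on rows and columns `{0,…,m}`: the maximal positive operator matrix supported there
with `T_Q - S ≥ 0`. -/
def IsSchurToep (Q : ℤ → H →L[ℂ] H) (m : ℕ) (S : ℕ → ℕ → H →L[ℂ] H) : Prop :=
  (∀ i j, m < i ∨ m < j → S i j = 0) ∧ (∀ i j, (S i j).adjoint = S j i) ∧
    (∀ v, 0 ≤ schurQF m S v) ∧
    (∀ N (v : ℕ → H), (∀ k, N ≤ k → v k = 0) → schurQF m S v ≤ toepQF Q N v) ∧
    ∀ X : ℕ → ℕ → H →L[ℂ] H, (∀ i j, m < i ∨ m < j → X i j = 0) →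
      (∀ i j, (X i j).adjoint = X j i) → (∀ v, 0 ≤ schurQF m X v) →
      (∀ N (v : ℕ → H), (∀ k, N ≤ k → v k = 0) → schurQF m X v ≤ toepQF Q N v) →
      ∀ v, schurQF m X v ≤ schurQF m S v

namespace SchurCholesky


/-- `u` vanishes from `N` on. -/
def Bdd (N : ℕ) (u : ℕ →₀ H) : Prop := ∀ k, N ≤ k → u k = 0

/-- A bound for a finitely supported function. -/
def bnd (u : ℕ →₀ H) : ℕ := u.support.sup _root_.id + 1

lemma bdd_bnd (u : ℕ →₀ H) : Bdd (bnd u) u := by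
  intro k hk
  by_contra h
  have hmem : k ∈ u.support := Finsupp.mem_support_iff.2 h
  have := Finset.le_sup (f := _root_.id) hmem
  simp only [_root_.id] at this
  unfold bnd at hk
  omega

lemma Bdd.mono {N M : ℕ} {u : ℕ →₀ H} (h : Bdd N u) (hNM : N ≤ M) : Bdd M u :=
  fun k hk => h k (le_trans hNM hk)

lemma Bdd.support_subset {N : ℕ} {u : ℕ →₀ H} (h : Bdd N u) :
    u.support ⊆ Finset.range N := by
  intro i hi
  rw [Finset.mem_range]
  by_contra hc
  exact (Finsupp.mem_support_iff.1 hi) (h i (by omega))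

variable (Q : ℤ → H →L[ℂ] H)

/-- The Toeplitz sesquilinear form on finitely supported sequences. -/
noncomputable def tinner (u v : ℕ →₀ H) : ℂ :=
  ∑ i ∈ v.support, ∑ j ∈ u.support, ⟪Q ((i : ℤ) - (j : ℤ)) (u j), v i⟫_ℂ

lemma tinner_eq_sum {u v : ℕ →₀ H} {N : ℕ} (hu : Bdd N u) (hv : Bdd N v) :
    tinner Q u v =
      ∑ i ∈ Finset.range N, ∑ j ∈ Finset.range N,
        ⟪Q ((i : ℤ) - (j : ℤ)) (u j), v i⟫_ℂ := by
  unfold tinner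
  rw [Finset.sum_subset hv.support_subset]
  · refine Finset.sum_congr rfl fun i _ => ?_
    refine Finset.sum_subset hu.support_subset fun j _ hj => ?_
    rw [Finsupp.notMem_support_iff.1 hj]
    simp
  · intro i _ hi
    rw [Finsupp.notMem_support_iff.1 hi]
    simp

lemma tinner_conj (hQ : ∀ k : ℤ, Q (-k) = (Q k).adjoint) (u v : ℕ →₀ H) :
    starRingEnd ℂ (tinner Q v u) = tinner Q u v := by
  set N := max (bnd u) (bnd v) with hN
  rw [tinner_eq_sum Q (N := N) ((bdd_bnd v).mono (le_max_right _ _))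
      ((bdd_bnd u).mono (le_max_left _ _)),
    tinner_eq_sum Q (N := N) ((bdd_bnd u).mono (le_max_left _ _))
      ((bdd_bnd v).mono (le_max_right _ _))]
  rw [map_sum]
  rw [Finset.sum_comm]
  refine Finset.sum_congr rfl fun i _ => ?_
  rw [map_sum]
  refine Finset.sum_congr rfl fun j _ => ?_
  rw [inner_conj_symm]
  have hadj : Q ((j : ℤ) - i) = (Q ((i : ℤ) - j)).adjoint := by
    have := hQ ((i : ℤ) - j)
    rw [neg_sub] at this
    exact this
  rw [hadj, ContinuousLinearMap.adjoint_inner_left]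

lemma tinner_nonneg_re (hQ : ToepPos Q) (u : ℕ →₀ H) : 0 ≤ (tinner Q u u).re := by
  rw [tinner_eq_sum Q (bdd_bnd u) (bdd_bnd u), Complex.re_sum]
  have := hQ.2 (bnd u) (fun k => u k)
  unfold toepQF at this
  convert this using 2 with i hi
  rw [Complex.re_sum]

lemma Bdd.add {N : ℕ} {u u' : ℕ →₀ H} (h : Bdd N u) (h' : Bdd N u') : Bdd N (u + u') := by
  intro k hk
  rw [Finsupp.add_apply, h k hk, h' k hk, add_zero]

lemma Bdd.smul {N : ℕ} {u : ℕ →₀ H} (r : ℂ) (h : Bdd N u) : Bdd N (r • u) := by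
  intro k hk
  rw [Finsupp.smul_apply, h k hk, smul_zero]

lemma tinner_add_left (u u' v : ℕ →₀ H) :
    tinner Q (u + u') v = tinner Q u v + tinner Q u' v := by
  set N := max (max (bnd u) (bnd u')) (bnd v) with hN
  have hu : Bdd N u := (bdd_bnd u).mono (by omega)
  have hu' : Bdd N u' := (bdd_bnd u').mono (by omega)
  have hv : Bdd N v := (bdd_bnd v).mono (by omega)
  rw [tinner_eq_sum Q (hu.add hu') hv, tinner_eq_sum Q hu hv, tinner_eq_sum Q hu' hv,
    ← Finset.sum_add_distrib]
  refine Finset.sum_congr rfl fun i _ => ?_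
  rw [← Finset.sum_add_distrib]
  refine Finset.sum_congr rfl fun j _ => ?_
  rw [Finsupp.add_apply, map_add, inner_add_left]

lemma tinner_smul_left (r : ℂ) (u v : ℕ →₀ H) :
    tinner Q (r • u) v = starRingEnd ℂ r * tinner Q u v := by
  set N := max (bnd u) (bnd v) with hN
  have hu : Bdd N u := (bdd_bnd u).mono (by omega)
  have hv : Bdd N v := (bdd_bnd v).mono (by omega)
  rw [tinner_eq_sum Q (hu.smul r) hv, tinner_eq_sum Q hu hv, Finset.mul_sum]
  refine Finset.sum_congr rfl fun i _ => ?_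
  rw [Finset.mul_sum]
  refine Finset.sum_congr rfl fun j _ => ?_
  rw [Finsupp.smul_apply, map_smul, inner_smul_left]

variable (hQ : ToepPos Q)

/-- Type synonym for finitely supported sequences with the Toeplitz semi-inner product. -/
def PreE (Q : ℤ → H →L[ℂ] H) (_hQ : ToepPos Q) : Type _ := ℕ →₀ H

noncomputable instance : AddCommGroup (PreE Q hQ) := inferInstanceAs (AddCommGroup (ℕ →₀ H))
noncomputable instance : Module ℂ (PreE Q hQ) := inferInstanceAs (Module ℂ (ℕ →₀ H))

/-- Reinterpret an element of `PreE` as a finsupp. -/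
def PreE.toF {Q : ℤ → H →L[ℂ] H} {hQ : ToepPos Q} (u : PreE Q hQ) : ℕ →₀ H := u

/-- Reinterpret a finsupp as an element of `PreE`. -/
def PreE.ofF {Q : ℤ → H →L[ℂ] H} (hQ : ToepPos Q) (u : ℕ →₀ H) : PreE Q hQ := u

lemma PreE.toF_ofF {Q : ℤ → H →L[ℂ] H} (hQ : ToepPos Q) (u : ℕ →₀ H) :
    (PreE.ofF hQ u).toF = u := rfl

lemma PreE.toF_add {Q : ℤ → H →L[ℂ] H} {hQ : ToepPos Q} (u v : PreE Q hQ) :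
    (u + v).toF = u.toF + v.toF := rfl

lemma PreE.toF_smul {Q : ℤ → H →L[ℂ] H} {hQ : ToepPos Q} (r : ℂ) (u : PreE Q hQ) :
    (r • u).toF = r • u.toF := rfl

noncomputable instance PreE.core {Q : ℤ → H →L[ℂ] H} {hQ : ToepPos Q} :
    PreInnerProductSpace.Core ℂ (PreE Q hQ) where
  inner u v := tinner Q u.toF v.toF
  conj_inner_symm u v := tinner_conj Q hQ.1 _ _
  re_inner_nonneg u := tinner_nonneg_re Q hQ _
  add_left x y z := by
    show tinner Q ((x + y).toF) z.toF = _
    rw [PreE.toF_add, tinner_add_left]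
  smul_left x y r := by
    show tinner Q ((r • x).toF) y.toF = _
    rw [PreE.toF_smul, tinner_smul_left]

noncomputable instance {Q : ℤ → H →L[ℂ] H} {hQ : ToepPos Q} :
    SeminormedAddCommGroup (PreE Q hQ) :=
  @InnerProductSpace.Core.toSeminormedAddCommGroup ℂ _ _ _ _ _

noncomputable instance {Q : ℤ → H →L[ℂ] H} {hQ : ToepPos Q} :
    InnerProductSpace ℂ (PreE Q hQ) :=
  letI c : PreInnerProductSpace.Core ℂ (PreE Q hQ) := PreE.core
  { @InnerProductSpace.Core.toNormedSpace ℂ _ _ _ _ _ with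
    toInner := c.toInner
    norm_sq_eq_re_inner := fun x => by
      have h1 : ‖x‖ = Real.sqrt (RCLike.re (c.inner x x)) := rfl
      rw [h1, Real.sq_sqrt (c.re_inner_nonneg x)]
    conj_inner_symm := c.conj_inner_symm
    add_left := c.add_left
    smul_left := c.smul_left }

lemma PreE.inner_def {Q : ℤ → H →L[ℂ] H} {hQ : ToepPos Q} (u v : PreE Q hQ) :
    ⟪u, v⟫_ℂ = tinner Q u.toF v.toF := rfl

section ExtendCLM

variable {E' F' : Type*} [SeminormedAddCommGroup E'] [NormedSpace ℂ E']
  [NormedAddCommGroup F'] [NormedSpace ℂ F'] [CompleteSpace F']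

open UniformSpace in
/-- Extend a continuous linear map to the completion of its (possibly non-separated)
domain. -/
noncomputable def extendCLM (f : E' →L[ℂ] F') : Completion E' →L[ℂ] F' :=
  have hc : Continuous (Completion.extension (f : E' → F')) :=
    Completion.continuous_extension
  have hcoe : ∀ x : E', Completion.extension (f : E' → F') x = f x :=
    fun x => Completion.extension_coe f.uniformContinuous x
  { toFun := Completion.extension (f : E' → F')
    map_add' := fun x y => by
      refine Completion.induction_on₂ x y ?_ ?_
      · exact isClosed_eq (hc.comp continuous_add)
          ((hc.comp continuous_fst).add (hc.comp continuous_snd))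
      · intro a b
        rw [← Completion.coe_add, hcoe, hcoe, hcoe, map_add]
    map_smul' := fun c x => by
      refine Completion.induction_on x ?_ ?_
      · exact isClosed_eq (hc.comp (continuous_const_smul c))
          ((continuous_const_smul c).comp hc)
      · intro a
        show Completion.extension (⇑f) (c • (a : Completion E')) =
          c • Completion.extension (⇑f) (a : Completion E')
        rw [← Completion.coe_smul, hcoe, hcoe]
        exact map_smul f c a
    cont := hc }

open UniformSpace in
lemma extendCLM_coe (f : E' →L[ℂ] F') (x : E') :
    extendCLM f (x : Completion E') = f x :=
  Completion.extension_coe f.uniformContinuous x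

end ExtendCLM

section K

variable {Q : ℤ → H →L[ℂ] H} {hQ : ToepPos Q}

/-- The Hilbert space obtained by completing the Toeplitz semi-inner-product space. -/
@[nolint unusedArguments]
def K (Q : ℤ → H →L[ℂ] H) (hQ : ToepPos Q) : Type _ := UniformSpace.Completion (PreE Q hQ)

noncomputable instance : NormedAddCommGroup (K Q hQ) :=
  inferInstanceAs (NormedAddCommGroup (UniformSpace.Completion (PreE Q hQ)))
noncomputable instance : InnerProductSpace ℂ (K Q hQ) :=
  inferInstanceAs (InnerProductSpace ℂ (UniformSpace.Completion (PreE Q hQ)))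
instance : CompleteSpace (K Q hQ) :=
  inferInstanceAs (CompleteSpace (UniformSpace.Completion (PreE Q hQ)))

/-- Canonical map to the completion. -/
noncomputable def mkK (Q : ℤ → H →L[ℂ] H) (hQ : ToepPos Q) : PreE Q hQ →L[ℂ] K Q hQ :=
  UniformSpace.Completion.toComplL

lemma mkK_apply (u : PreE Q hQ) : mkK Q hQ u = (u : UniformSpace.Completion (PreE Q hQ)) := rfl

lemma inner_mkK (u v : PreE Q hQ) : ⟪mkK Q hQ u, mkK Q hQ v⟫_ℂ = tinner Q u.toF v.toF :=
  UniformSpace.Completion.inner_coe (𝕜 := ℂ) u v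

lemma norm_mkK (u : PreE Q hQ) : ‖mkK Q hQ u‖ = ‖u‖ :=
  UniformSpace.Completion.norm_coe u

lemma denseRange_mkK : DenseRange (mkK Q hQ) :=
  UniformSpace.Completion.denseRange_coe

/-- Extension of maps from `PreE` to `K`. -/
noncomputable def extK {F' : Type*} [NormedAddCommGroup F'] [NormedSpace ℂ F']
    [CompleteSpace F'] (f : PreE Q hQ →L[ℂ] F') : K Q hQ →L[ℂ] F' := extendCLM f

lemma extK_mkK {F' : Type*} [NormedAddCommGroup F'] [NormedSpace ℂ F'] [CompleteSpace F']
    (f : PreE Q hQ →L[ℂ] F') (u : PreE Q hQ) : extK f (mkK Q hQ u) = f u :=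
  extendCLM_coe f u

lemma extK_unique {F' : Type*} [NormedAddCommGroup F'] [NormedSpace ℂ F'] [CompleteSpace F']
    (g g' : K Q hQ →L[ℂ] F') (h : ∀ u : PreE Q hQ, g (mkK Q hQ u) = g' (mkK Q hQ u)) :
    g = g' := by
  ext x
  exact DenseRange.equalizer denseRange_mkK g.continuous g'.continuous (funext h) ▸ rfl

end K

section Ops

variable {Q : ℤ → H →L[ℂ] H} {hQ : ToepPos Q}

lemma tinner_single (i j : ℕ) (h h' : H) :
    tinner Q (Finsupp.single j h) (Finsupp.single i h') = ⟪Q ((i : ℤ) - (j : ℤ)) h, h'⟫_ℂ := by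
  unfold tinner
  rw [Finset.sum_subset (Finsupp.support_single_subset (a := i) (b := h'))]
  · rw [Finset.sum_singleton]
    rw [Finset.sum_subset (Finsupp.support_single_subset (a := j) (b := h))]
    · rw [Finset.sum_singleton, Finsupp.single_eq_same, Finsupp.single_eq_same]
    · intro x _ hx
      rw [Finsupp.notMem_support_iff.1 hx]
      simp
  · intro x _ hx
    rw [Finsupp.notMem_support_iff.1 hx]
    simp

/-- Insertion of `H` at coordinate `j`, as a map into `PreE`. -/
noncomputable def singleCLM (Q : ℤ → H →L[ℂ] H) (hQ : ToepPos Q) (j : ℕ) :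
    H →L[ℂ] PreE Q hQ := by
  refine LinearMap.mkContinuous
    { toFun := fun h => PreE.ofF hQ (Finsupp.single j h)
      map_add' := fun x y => by
        show PreE.ofF hQ (Finsupp.single j (x + y)) = _
        rw [Finsupp.single_add]
        rfl
      map_smul' := fun c x => by
        show PreE.ofF hQ (Finsupp.single j (c • x)) = _
        rw [← Finsupp.smul_single]
        rfl }
    (Real.sqrt ‖Q 0‖) (fun h => ?_)
  show ‖PreE.ofF hQ (Finsupp.single j h)‖ ≤ Real.sqrt ‖Q 0‖ * ‖h‖
  have h2 : (‖PreE.ofF hQ (Finsupp.single j h)‖ : ℝ) ^ 2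
      = RCLike.re (⟪PreE.ofF hQ (Finsupp.single j h), PreE.ofF hQ (Finsupp.single j h)⟫_ℂ) :=
    norm_sq_eq_re_inner _
  rw [PreE.inner_def, PreE.toF_ofF, tinner_single, sub_self] at h2
  have h3 : RCLike.re (⟪Q 0 h, h⟫_ℂ) ≤ ‖Q 0‖ * ‖h‖ * ‖h‖ := by
    calc RCLike.re (⟪Q 0 h, h⟫_ℂ) ≤ ‖(⟪Q 0 h, h⟫_ℂ)‖ := RCLike.re_le_norm _
    _ ≤ ‖Q 0 h‖ * ‖h‖ := norm_inner_le_norm _ _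
    _ ≤ ‖Q 0‖ * ‖h‖ * ‖h‖ :=
      mul_le_mul_of_nonneg_right ((Q 0).le_opNorm h) (norm_nonneg h)
  have h4 : ‖PreE.ofF hQ (Finsupp.single j h)‖
      = Real.sqrt (‖PreE.ofF hQ (Finsupp.single j h)‖ ^ 2) :=
    (Real.sqrt_sq (norm_nonneg _)).symm
  rw [h4, h2]
  calc Real.sqrt (RCLike.re (⟪Q 0 h, h⟫_ℂ)) ≤ Real.sqrt (‖Q 0‖ * ‖h‖ * ‖h‖) :=
      Real.sqrt_le_sqrt h3
  _ = Real.sqrt ‖Q 0‖ * ‖h‖ := by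
      rw [mul_assoc, Real.sqrt_mul (norm_nonneg _), Real.sqrt_mul_self (norm_nonneg h)]

lemma singleCLM_apply (j : ℕ) (h : H) :
    (singleCLM Q hQ j h).toF = Finsupp.single j h := rfl

lemma PreE.toF_injective {Q : ℤ → H →L[ℂ] H} {hQ : ToepPos Q} :
    Function.Injective (PreE.toF (Q := Q) (hQ := hQ)) := fun _ _ h => h

/-- Insertion of `H` at coordinate `j` into the Hilbert space `K`. -/
noncomputable def iota (Q : ℤ → H →L[ℂ] H) (hQ : ToepPos Q) (j : ℕ) : H →L[ℂ] K Q hQ :=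
  (mkK Q hQ) ∘L (singleCLM Q hQ j)

lemma inner_iota (i j : ℕ) (h h' : H) :
    ⟪iota Q hQ j h, iota Q hQ i h'⟫_ℂ = ⟪Q ((i : ℤ) - (j : ℤ)) h, h'⟫_ℂ := by
  unfold iota
  rw [ContinuousLinearMap.comp_apply, ContinuousLinearMap.comp_apply, inner_mkK,
    singleCLM_apply, singleCLM_apply, tinner_single]

/-- The coordinate shift on finitely supported sequences. -/
noncomputable def shf : (ℕ →₀ H) →ₗ[ℂ] (ℕ →₀ H) := Finsupp.lmapDomain H ℂ (· + 1)

lemma shf_apply_succ (u : ℕ →₀ H) (k : ℕ) : shf u (k + 1) = u k := by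
  unfold shf
  rw [Finsupp.lmapDomain_apply]
  exact Finsupp.mapDomain_apply (fun a b => by omega) u k

lemma shf_apply_zero (u : ℕ →₀ H) : shf u 0 = 0 := by
  unfold shf
  rw [Finsupp.lmapDomain_apply]
  refine Finsupp.mapDomain_notin_range _ _ ?_
  rintro ⟨a, ha⟩
  simp only [] at ha
  omega

lemma shf_single (j : ℕ) (h : H) : shf (Finsupp.single j h) = Finsupp.single (j + 1) h := by
  unfold shf
  rw [Finsupp.lmapDomain_apply, Finsupp.mapDomain_single]

lemma Bdd.shf {N : ℕ} {u : ℕ →₀ H} (h : Bdd N u) : Bdd (N + 1) (SchurCholesky.shf u) := by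
  intro k hk
  match k, hk with
  | 0, hk => exact absurd hk (by omega)
  | k' + 1, hk =>
    rw [shf_apply_succ]
    exact h k' (by omega)

lemma tinner_shf (u v : ℕ →₀ H) : tinner Q (shf u) (shf v) = tinner Q u v := by
  set N := max (bnd u) (bnd v) with hN
  have hu : Bdd N u := (bdd_bnd u).mono (by omega)
  have hv : Bdd N v := (bdd_bnd v).mono (by omega)
  rw [tinner_eq_sum Q hu.shf hv.shf, tinner_eq_sum Q hu hv]
  rw [Finset.sum_range_succ']
  have hz : ∀ j ∈ Finset.range (N + 1),
      ⟪Q ((((0 : ℕ)) : ℤ) - (j : ℤ)) (shf u j), shf v 0⟫_ℂ = 0 := by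
    intro j _
    rw [shf_apply_zero, inner_zero_right]
  rw [Finset.sum_congr rfl hz, Finset.sum_const_zero, add_zero]
  refine Finset.sum_congr rfl fun i _ => ?_
  rw [Finset.sum_range_succ']
  rw [shf_apply_zero]
  simp only [map_zero, inner_zero_left, add_zero]
  refine Finset.sum_congr rfl fun j _ => ?_
  rw [shf_apply_succ, shf_apply_succ]
  congr 2
  push_cast
  ring

/-- The shift as a continuous linear map on `PreE`. -/
noncomputable def shfCLM (Q : ℤ → H →L[ℂ] H) (hQ : ToepPos Q) :
    PreE Q hQ →L[ℂ] PreE Q hQ := by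
  refine LinearMap.mkContinuous
    { toFun := fun u => PreE.ofF hQ (shf u.toF)
      map_add' := fun x y => by
        show PreE.ofF hQ (shf ((x + y).toF)) = _
        rw [PreE.toF_add, map_add]
        rfl
      map_smul' := fun c x => by
        show PreE.ofF hQ (shf ((c • x).toF)) = _
        rw [PreE.toF_smul, map_smul]
        rfl }
    1 (fun u => ?_)
  show ‖PreE.ofF hQ (shf u.toF)‖ ≤ 1 * ‖u‖
  have h1 : ‖PreE.ofF hQ (shf u.toF)‖ ^ 2
      = RCLike.re (⟪PreE.ofF hQ (shf u.toF), PreE.ofF hQ (shf u.toF)⟫_ℂ) := norm_sq_eq_re_inner _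
  have h2 : (‖u‖ : ℝ) ^ 2 = RCLike.re (⟪u, u⟫_ℂ) := norm_sq_eq_re_inner _
  rw [PreE.inner_def, PreE.toF_ofF, tinner_shf] at h1
  rw [PreE.inner_def] at h2
  have : ‖PreE.ofF hQ (shf u.toF)‖ ^ 2 = ‖u‖ ^ 2 := by rw [h1, h2]
  have hnn := norm_nonneg (PreE.ofF hQ (shf u.toF))
  have hnn' := norm_nonneg u
  nlinarith [sq_nonneg (‖PreE.ofF hQ (shf u.toF)‖ - ‖u‖)]

lemma shfCLM_apply (u : PreE Q hQ) : (shfCLM Q hQ u).toF = shf u.toF := rfl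

/-- The isometric shift on the Hilbert space `K`. -/
noncomputable def V (Q : ℤ → H →L[ℂ] H) (hQ : ToepPos Q) : K Q hQ →L[ℂ] K Q hQ :=
  extK ((mkK Q hQ) ∘L (shfCLM Q hQ))

lemma V_mkK (u : PreE Q hQ) : V Q hQ (mkK Q hQ u) = mkK Q hQ (shfCLM Q hQ u) :=
  extK_mkK _ u

lemma inner_V_V (x y : K Q hQ) : ⟪V Q hQ x, V Q hQ y⟫_ℂ = ⟪x, y⟫_ℂ := by
  have hc1 : Continuous fun p : K Q hQ × K Q hQ => ⟪V Q hQ p.1, V Q hQ p.2⟫_ℂ :=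
    Continuous.inner ((V Q hQ).continuous.comp continuous_fst)
      ((V Q hQ).continuous.comp continuous_snd)
  have hc2 : Continuous fun p : K Q hQ × K Q hQ => ⟪p.1, p.2⟫_ℂ :=
    Continuous.inner continuous_fst continuous_snd
  have key : ∀ u v : PreE Q hQ,
      ⟪V Q hQ (mkK Q hQ u), V Q hQ (mkK Q hQ v)⟫_ℂ = ⟪mkK Q hQ u, mkK Q hQ v⟫_ℂ := by
    intro u v
    rw [V_mkK, V_mkK, inner_mkK, inner_mkK, shfCLM_apply, shfCLM_apply, tinner_shf]
  -- extend by density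
  have hdense : DenseRange fun p : PreE Q hQ × PreE Q hQ => (mkK Q hQ p.1, mkK Q hQ p.2) :=
    DenseRange.prodMap denseRange_mkK denseRange_mkK
  have := DenseRange.equalizer hdense hc1 hc2 (funext fun p => key p.1 p.2)
  exact congrFun this (x, y)

lemma V_iota (j : ℕ) (h : H) : V Q hQ (iota Q hQ j h) = iota Q hQ (j + 1) h := by
  unfold iota
  rw [ContinuousLinearMap.comp_apply, ContinuousLinearMap.comp_apply, V_mkK]
  refine congrArg (mkK Q hQ) ?_
  have : (shfCLM Q hQ (singleCLM Q hQ j h)).toF = (singleCLM Q hQ (j + 1) h).toF := by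
    rw [shfCLM_apply, singleCLM_apply, singleCLM_apply, shf_single]
  exact this

end Ops

section Adjoints

variable {Q : ℤ → H →L[ℂ] H} {hQ : ToepPos Q}

/-- The backward shift. -/
noncomputable def W (Q : ℤ → H →L[ℂ] H) (hQ : ToepPos Q) : K Q hQ →L[ℂ] K Q hQ :=
  ContinuousLinearMap.adjoint (V Q hQ)

lemma W_mul_V : W Q hQ * V Q hQ = 1 := by
  ext x
  refine ext_inner_right ℂ fun y => ?_
  rw [ContinuousLinearMap.mul_apply]
  rw [W, ContinuousLinearMap.adjoint_inner_left, inner_V_V]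
  rw [ContinuousLinearMap.one_apply]

lemma Wpow_mul_Vpow (k : ℕ) : W Q hQ ^ k * V Q hQ ^ k = 1 := by
  induction k with
  | zero => simp
  | succ n ih =>
    rw [pow_succ, pow_succ']
    calc W Q hQ ^ n * W Q hQ * (V Q hQ * V Q hQ ^ n)
        = W Q hQ ^ n * (W Q hQ * V Q hQ) * V Q hQ ^ n := by
          simp only [mul_assoc]
      _ = W Q hQ ^ n * V Q hQ ^ n := by rw [W_mul_V, mul_one]
      _ = 1 := ih

lemma Wpow_mul_Vpow_of_le {k j : ℕ} (h : k ≤ j) :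
    W Q hQ ^ k * V Q hQ ^ j = V Q hQ ^ (j - k) := by
  have : V Q hQ ^ j = V Q hQ ^ k * V Q hQ ^ (j - k) := by
    rw [← pow_add]
    congr 1
    omega
  rw [this, ← mul_assoc, Wpow_mul_Vpow, one_mul]

lemma Wpow_mul_Vpow_of_ge {k j : ℕ} (h : j ≤ k) :
    W Q hQ ^ k * V Q hQ ^ j = W Q hQ ^ (k - j) := by
  have : W Q hQ ^ k = W Q hQ ^ (k - j) * W Q hQ ^ j := by
    rw [← pow_add]
    congr 1
    omega
  rw [this, mul_assoc, Wpow_mul_Vpow, mul_one]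

/-- The defect projection. -/
noncomputable def Dd (Q : ℤ → H →L[ℂ] H) (hQ : ToepPos Q) : K Q hQ →L[ℂ] K Q hQ :=
  1 - V Q hQ * W Q hQ

lemma Dd_mul_V : Dd Q hQ * V Q hQ = 0 := by
  rw [Dd, sub_mul, one_mul, mul_assoc, W_mul_V, mul_one, sub_self]

lemma Dd_mul_Vpow {p : ℕ} (hp : 1 ≤ p) : Dd Q hQ * V Q hQ ^ p = 0 := by
  have : V Q hQ ^ p = V Q hQ * V Q hQ ^ (p - 1) := by
    rw [← pow_succ']
    congr 1
    omega
  rw [this, ← mul_assoc, Dd_mul_V, zero_mul]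

lemma norm_V_apply (z : K Q hQ) : ‖V Q hQ z‖ = ‖z‖ := by
  have h1 : ‖V Q hQ z‖ ^ 2 = ‖z‖ ^ 2 := by
    rw [← inner_self_eq_norm_sq (𝕜 := ℂ), ← inner_self_eq_norm_sq (𝕜 := ℂ), inner_V_V]
  have := norm_nonneg (V Q hQ z)
  have := norm_nonneg z
  nlinarith

lemma norm_Vpow_apply (k : ℕ) (z : K Q hQ) : ‖(V Q hQ ^ k) z‖ = ‖z‖ := by
  induction k with
  | zero => simp
  | succ n ih =>
    rw [pow_succ', ContinuousLinearMap.mul_apply, norm_V_apply, ih]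

lemma inner_Vpow (k : ℕ) (x y : K Q hQ) : ⟪(V Q hQ ^ k) x, (V Q hQ ^ k) y⟫_ℂ = ⟪x, y⟫_ℂ := by
  induction k with
  | zero => simp
  | succ n ih =>
    rw [pow_succ', ContinuousLinearMap.mul_apply, ContinuousLinearMap.mul_apply, inner_V_V, ih]

lemma normSq_Dd (z : K Q hQ) : ‖Dd Q hQ z‖ ^ 2 = ‖z‖ ^ 2 - ‖W Q hQ z‖ ^ 2 := by
  have hDz : Dd Q hQ z = z - V Q hQ (W Q hQ z) := by
    rw [Dd, ContinuousLinearMap.sub_apply, ContinuousLinearMap.one_apply,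
      ContinuousLinearMap.mul_apply]
  have hVW : ⟪V Q hQ (W Q hQ z), z⟫_ℂ = ⟪W Q hQ z, W Q hQ z⟫_ℂ := by
    rw [W, ← ContinuousLinearMap.adjoint_inner_right]
  have hWV : ⟪z, V Q hQ (W Q hQ z)⟫_ℂ = starRingEnd ℂ (⟪W Q hQ z, W Q hQ z⟫_ℂ) := by
    rw [← inner_conj_symm, hVW]
  have hVV : ⟪V Q hQ (W Q hQ z), V Q hQ (W Q hQ z)⟫_ℂ = ⟪W Q hQ z, W Q hQ z⟫_ℂ :=
    inner_V_V _ _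
  have expand : ⟪Dd Q hQ z, Dd Q hQ z⟫_ℂ
      = ⟪z, z⟫_ℂ - starRingEnd ℂ (⟪W Q hQ z, W Q hQ z⟫_ℂ) := by
    rw [hDz, inner_sub_sub_self, hVW, hWV, hVV]
    ring
  have h1 : (‖Dd Q hQ z‖ : ℝ) ^ 2 = RCLike.re (⟪Dd Q hQ z, Dd Q hQ z⟫_ℂ) :=
    (inner_self_eq_norm_sq _).symm
  have h2 : (‖z‖ : ℝ) ^ 2 = RCLike.re (⟪z, z⟫_ℂ) := (inner_self_eq_norm_sq _).symm
  have h3 : (‖W Q hQ z‖ : ℝ) ^ 2 = RCLike.re (⟪W Q hQ z, W Q hQ z⟫_ℂ) :=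
    (inner_self_eq_norm_sq _).symm
  rw [h1, h2, h3, expand]
  simp [Complex.sub_re, Complex.conj_re]

lemma telescope (m : ℕ) (z : K Q hQ) :
    ∑ k ∈ Finset.range (m + 1), ‖Dd Q hQ ((W Q hQ ^ k) z)‖ ^ 2
      = ‖z‖ ^ 2 - ‖(W Q hQ ^ (m + 1)) z‖ ^ 2 := by
  induction m with
  | zero =>
    rw [Finset.sum_range_one, pow_zero, ContinuousLinearMap.one_apply, normSq_Dd, pow_one]
  | succ n ih =>
    rw [Finset.sum_range_succ, ih, normSq_Dd]
    have : (W Q hQ) ((W Q hQ ^ (n + 1)) z) = (W Q hQ ^ (n + 1 + 1)) z := by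
      rw [pow_succ' (W Q hQ) (n + 1), ContinuousLinearMap.mul_apply]
    rw [this]
    ring

/-- The coefficient operators into the defect space. -/
noncomputable def G (Q : ℤ → H →L[ℂ] H) (hQ : ToepPos Q) (r : ℕ) : H →L[ℂ] K Q hQ :=
  (Dd Q hQ * W Q hQ ^ r) ∘L iota Q hQ 0

lemma G_apply (r : ℕ) (h : H) :
    G Q hQ r h = Dd Q hQ ((W Q hQ ^ r) (iota Q hQ 0 h)) := rfl

lemma iota_eq_pow (j : ℕ) (h : H) : iota Q hQ j h = (V Q hQ ^ j) (iota Q hQ 0 h) := by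
  induction j with
  | zero => simp
  | succ n ih =>
    rw [← V_iota, ih, pow_succ', ContinuousLinearMap.mul_apply]

lemma Dd_Wpow_iota (k j : ℕ) (h : H) :
    Dd Q hQ ((W Q hQ ^ k) (iota Q hQ j h))
      = if j ≤ k then G Q hQ (k - j) h else 0 := by
  rw [iota_eq_pow]
  by_cases hjk : j ≤ k
  · rw [if_pos hjk, G_apply]
    have : (W Q hQ ^ k) ((V Q hQ ^ j) (iota Q hQ 0 h))
        = (W Q hQ ^ (k - j)) (iota Q hQ 0 h) := by
      rw [← ContinuousLinearMap.mul_apply, Wpow_mul_Vpow_of_ge hjk]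
    rw [this]
  · rw [if_neg hjk]
    have h1 : (W Q hQ ^ k) ((V Q hQ ^ j) (iota Q hQ 0 h))
        = (V Q hQ ^ (j - k)) (iota Q hQ 0 h) := by
      rw [← ContinuousLinearMap.mul_apply, Wpow_mul_Vpow_of_le (by omega)]
    rw [h1, ← ContinuousLinearMap.mul_apply, Dd_mul_Vpow (by omega),
      ContinuousLinearMap.zero_apply]

end Adjoints

section Mside

variable {Q : ℤ → H →L[ℂ] H} {hQ : ToepPos Q}

/-- `A = G 0`, the defect coefficient map. -/
noncomputable def AA (Q : ℤ → H →L[ℂ] H) (hQ : ToepPos Q) : H →L[ℂ] K Q hQ := G Q hQ 0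

lemma mkK_eq_sum {u : ℕ →₀ H} {N : ℕ} (h : Bdd N u) :
    mkK Q hQ (PreE.ofF hQ u) = ∑ j ∈ Finset.range N, iota Q hQ j (u j) := by
  have hu : u = ∑ j ∈ Finset.range N, Finsupp.single j (u j) := by
    conv_lhs => rw [← Finsupp.sum_single u]
    rw [Finsupp.sum]
    refine Finset.sum_subset h.support_subset fun j _ hj => ?_
    rw [Finsupp.notMem_support_iff.1 hj, Finsupp.single_zero]
  have h2 : PreE.ofF hQ u = ∑ j ∈ Finset.range N, singleCLM Q hQ j (u j) := by
    refine PreE.toF_injective ?_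
    rw [PreE.toF_ofF]
    have hsum : (∑ j ∈ Finset.range N, singleCLM Q hQ j (u j)).toF
        = ∑ j ∈ Finset.range N, (singleCLM Q hQ j (u j)).toF := rfl
    rw [hsum]
    have : ∀ j ∈ Finset.range N, (singleCLM Q hQ j (u j)).toF = Finsupp.single j (u j) :=
      fun j _ => singleCLM_apply j (u j)
    rw [Finset.sum_congr rfl this, ← hu]
  rw [h2, map_sum]
  exact Finset.sum_congr rfl fun j _ => rfl

lemma Dd_mkK (u : PreE Q hQ) : Dd Q hQ (mkK Q hQ u) = AA Q hQ (u.toF 0) := by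
  have h0 : mkK Q hQ u = mkK Q hQ (PreE.ofF hQ u.toF) := rfl
  rw [h0, mkK_eq_sum (N := bnd u.toF + 1) ((bdd_bnd u.toF).mono (by omega)), map_sum]
  have hterm : ∀ j ∈ Finset.range (bnd u.toF + 1),
      Dd Q hQ (iota Q hQ j (u.toF j)) = if j = 0 then AA Q hQ (u.toF 0) else 0 := by
    intro j _
    have := Dd_Wpow_iota (Q := Q) (hQ := hQ) 0 j (u.toF j)
    rw [pow_zero, ContinuousLinearMap.one_apply] at this
    rw [this]
    by_cases hj : j = 0
    · subst hj
      simp [AA]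
    · rw [if_neg (by omega), if_neg hj]
  rw [Finset.sum_congr rfl hterm, Finset.sum_ite_eq' (Finset.range (bnd u.toF + 1)) 0,
    if_pos (Finset.mem_range.2 (by omega))]

/-- Type synonym for `H` with the pulled-back semi-inner product `⟪A·, A·⟫`. -/
@[nolint unusedArguments]
def Hp (Q : ℤ → H →L[ℂ] H) (_hQ : ToepPos Q) : Type _ := H

noncomputable instance : AddCommGroup (Hp Q hQ) := inferInstanceAs (AddCommGroup H)
noncomputable instance : Module ℂ (Hp Q hQ) := inferInstanceAs (Module ℂ H)

/-- Reinterpret `Hp` as `H`. -/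
def Hp.toH {Q : ℤ → H →L[ℂ] H} {hQ : ToepPos Q} (x : Hp Q hQ) : H := x
/-- Reinterpret `H` as `Hp`. -/
def Hp.ofH {Q : ℤ → H →L[ℂ] H} (hQ : ToepPos Q) (x : H) : Hp Q hQ := x

noncomputable instance Hp.core {Q : ℤ → H →L[ℂ] H} {hQ : ToepPos Q} :
    PreInnerProductSpace.Core ℂ (Hp Q hQ) where
  inner x y := ⟪AA Q hQ x.toH, AA Q hQ y.toH⟫_ℂ
  conj_inner_symm x y := by
    show starRingEnd ℂ (⟪AA Q hQ y.toH, AA Q hQ x.toH⟫_ℂ) = ⟪AA Q hQ x.toH, AA Q hQ y.toH⟫_ℂ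
    exact inner_conj_symm _ _
  re_inner_nonneg x := (inner_self_nonneg : 0 ≤ RCLike.re (⟪AA Q hQ x.toH, AA Q hQ x.toH⟫_ℂ))
  add_left x y z := by
    show ⟪AA Q hQ ((x + y).toH), _⟫_ℂ = _
    have : (x + y).toH = x.toH + y.toH := rfl
    rw [this, map_add, inner_add_left]
  smul_left x y r := by
    show ⟪AA Q hQ ((r • x).toH), _⟫_ℂ = _
    have : (r • x).toH = r • x.toH := rfl
    rw [this, map_smul, inner_smul_left]

noncomputable instance {Q : ℤ → H →L[ℂ] H} {hQ : ToepPos Q} :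
    SeminormedAddCommGroup (Hp Q hQ) :=
  @InnerProductSpace.Core.toSeminormedAddCommGroup ℂ _ _ _ _ _

noncomputable instance {Q : ℤ → H →L[ℂ] H} {hQ : ToepPos Q} :
    InnerProductSpace ℂ (Hp Q hQ) :=
  letI c : PreInnerProductSpace.Core ℂ (Hp Q hQ) := Hp.core
  { @InnerProductSpace.Core.toNormedSpace ℂ _ _ _ _ _ with
    toInner := c.toInner
    norm_sq_eq_re_inner := fun x => by
      have h1 : ‖x‖ = Real.sqrt (RCLike.re (c.inner x x)) := rfl
      rw [h1, Real.sq_sqrt (c.re_inner_nonneg x)]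
    conj_inner_symm := c.conj_inner_symm
    add_left := c.add_left
    smul_left := c.smul_left }

lemma Hp.inner_def {Q : ℤ → H →L[ℂ] H} {hQ : ToepPos Q} (x y : Hp Q hQ) :
    ⟪x, y⟫_ℂ = ⟪AA Q hQ x.toH, AA Q hQ y.toH⟫_ℂ := by rfl

lemma Hp.norm_def {Q : ℤ → H →L[ℂ] H} {hQ : ToepPos Q} (x : Hp Q hQ) :
    ‖x‖ = ‖AA Q hQ x.toH‖ := by
  have h1 : ‖x‖ ^ 2 = RCLike.re (⟪x, x⟫_ℂ) := norm_sq_eq_re_inner _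
  rw [Hp.inner_def, inner_self_eq_norm_sq] at h1
  have := norm_nonneg x
  have := norm_nonneg (AA Q hQ x.toH)
  nlinarith

/-- Completion of `Hp`: the defect Hilbert space. -/
@[nolint unusedArguments]
def M (Q : ℤ → H →L[ℂ] H) (hQ : ToepPos Q) : Type _ := UniformSpace.Completion (Hp Q hQ)

noncomputable instance : NormedAddCommGroup (M Q hQ) :=
  inferInstanceAs (NormedAddCommGroup (UniformSpace.Completion (Hp Q hQ)))
noncomputable instance : InnerProductSpace ℂ (M Q hQ) :=
  inferInstanceAs (InnerProductSpace ℂ (UniformSpace.Completion (Hp Q hQ)))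
instance : CompleteSpace (M Q hQ) :=
  inferInstanceAs (CompleteSpace (UniformSpace.Completion (Hp Q hQ)))

/-- Canonical map into `M`. -/
noncomputable def mkM (Q : ℤ → H →L[ℂ] H) (hQ : ToepPos Q) : Hp Q hQ →L[ℂ] M Q hQ :=
  UniformSpace.Completion.toComplL

lemma norm_mkM (x : Hp Q hQ) : ‖mkM Q hQ x‖ = ‖x‖ := UniformSpace.Completion.norm_coe x

lemma denseRange_mkM : DenseRange (mkM Q hQ) := UniformSpace.Completion.denseRange_coe

/-- `A` as a map out of `Hp` (an isometry onto a dense subspace of the defect space). -/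
noncomputable def AAp (Q : ℤ → H →L[ℂ] H) (hQ : ToepPos Q) : Hp Q hQ →L[ℂ] K Q hQ :=
  LinearMap.mkContinuous
    { toFun := fun x => AA Q hQ x.toH
      map_add' := fun x y => map_add _ _ _
      map_smul' := fun c x => map_smul _ _ _ }
    1 (fun x => by
        show ‖AA Q hQ x.toH‖ ≤ 1 * ‖x‖
        rw [Hp.norm_def, one_mul])

lemma AAp_apply (x : Hp Q hQ) : AAp Q hQ x = AA Q hQ x.toH := rfl

/-- The canonical isometry from the abstract defect space into `K`. -/
noncomputable def alpha (Q : ℤ → H →L[ℂ] H) (hQ : ToepPos Q) : M Q hQ →L[ℂ] K Q hQ :=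
  extendCLM (AAp Q hQ)

lemma alpha_mkM (x : Hp Q hQ) : alpha Q hQ (mkM Q hQ x) = AA Q hQ x.toH :=
  extendCLM_coe (AAp Q hQ) x

lemma norm_alpha (z : M Q hQ) : ‖alpha Q hQ z‖ = ‖z‖ := by
  have h := DenseRange.equalizer (denseRange_mkM (Q := Q) (hQ := hQ))
    (continuous_norm.comp (alpha Q hQ).continuous) continuous_norm
    (funext fun x => by
      show ‖alpha Q hQ (mkM Q hQ x)‖ = ‖mkM Q hQ x‖
      rw [alpha_mkM, norm_mkM, Hp.norm_def])
  exact congrFun h z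

/-- `alpha` as a linear isometry. -/
noncomputable def alphaIso (Q : ℤ → H →L[ℂ] H) (hQ : ToepPos Q) : M Q hQ →ₗᵢ[ℂ] K Q hQ :=
  ⟨(alpha Q hQ).toLinearMap, norm_alpha⟩

lemma inner_alpha (x y : M Q hQ) : ⟪alpha Q hQ x, alpha Q hQ y⟫_ℂ = ⟪x, y⟫_ℂ :=
  (alphaIso Q hQ).inner_map_map x y

lemma alphaStar_mul_alpha (z : M Q hQ) :
    ContinuousLinearMap.adjoint (alpha Q hQ) (alpha Q hQ z) = z := by
  refine ext_inner_right ℂ fun y => ?_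
  rw [ContinuousLinearMap.adjoint_inner_left, ← inner_alpha z y]

lemma alpha_fix_Dd (z : K Q hQ) :
    alpha Q hQ (ContinuousLinearMap.adjoint (alpha Q hQ) (Dd Q hQ z)) = Dd Q hQ z := by
  have key : ∀ u : PreE Q hQ,
      alpha Q hQ (ContinuousLinearMap.adjoint (alpha Q hQ) (Dd Q hQ (mkK Q hQ u)))
        = Dd Q hQ (mkK Q hQ u) := by
    intro u
    rw [Dd_mkK]
    have hA : AA Q hQ (u.toF 0) = alpha Q hQ (mkM Q hQ (Hp.ofH hQ (u.toF 0))) :=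
      (alpha_mkM _).symm
    rw [hA, alphaStar_mul_alpha]
  have hc1 : Continuous fun z : K Q hQ =>
      alpha Q hQ (ContinuousLinearMap.adjoint (alpha Q hQ) (Dd Q hQ z)) :=
    (alpha Q hQ).continuous.comp
      ((ContinuousLinearMap.adjoint (alpha Q hQ)).continuous.comp (Dd Q hQ).continuous)
  have h := DenseRange.equalizer (denseRange_mkK (Q := Q) (hQ := hQ))
    hc1 (Dd Q hQ).continuous (funext key)
  exact congrFun h z

/-- The positive square root of `A*A`. -/
noncomputable def BB (Q : ℤ → H →L[ℂ] H) (hQ : ToepPos Q) : H →L[ℂ] H :=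
  CFC.sqrt (ContinuousLinearMap.adjoint (AA Q hQ) ∘L AA Q hQ)

lemma AA_adj_nonneg : (0 : H →L[ℂ] H) ≤ ContinuousLinearMap.adjoint (AA Q hQ) ∘L AA Q hQ := by
  rw [ContinuousLinearMap.nonneg_iff_isPositive]
  have := (ContinuousLinearMap.isPositive_one (E := K Q hQ) (𝕜 := ℂ)).adjoint_conj (AA Q hQ)
  exact this

lemma BB_sq : BB Q hQ ∘L BB Q hQ = ContinuousLinearMap.adjoint (AA Q hQ) ∘L AA Q hQ := by
  have := CFC.sqrt_mul_sqrt_self _ (AA_adj_nonneg (Q := Q) (hQ := hQ))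
  simpa [BB, ContinuousLinearMap.mul_def] using this

lemma BB_selfAdjoint : IsSelfAdjoint (BB Q hQ) :=
  IsSelfAdjoint.of_nonneg (CFC.sqrt_nonneg _)

lemma norm_BB (x : H) : ‖BB Q hQ x‖ = ‖AA Q hQ x‖ := by
  have h1 : ⟪BB Q hQ x, BB Q hQ x⟫_ℂ = ⟪AA Q hQ x, AA Q hQ x⟫_ℂ := by
    have e1 : ⟪BB Q hQ x, BB Q hQ x⟫_ℂ
        = ⟪ContinuousLinearMap.adjoint (BB Q hQ) (BB Q hQ x), x⟫_ℂ := by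
      rw [ContinuousLinearMap.adjoint_inner_left]
    have e2 : ContinuousLinearMap.adjoint (BB Q hQ) = BB Q hQ := by
      have := BB_selfAdjoint (Q := Q) (hQ := hQ)
      rwa [IsSelfAdjoint, ContinuousLinearMap.star_eq_adjoint] at this
    rw [e1, e2]
    have e3 : BB Q hQ (BB Q hQ x) = ContinuousLinearMap.adjoint (AA Q hQ) (AA Q hQ x) := by
      have := congrArg (fun T => T x) (BB_sq (Q := Q) (hQ := hQ))
      simpa using this
    rw [e3, ContinuousLinearMap.adjoint_inner_left]
  have h2 : (‖BB Q hQ x‖ : ℝ) ^ 2 = ‖AA Q hQ x‖ ^ 2 := by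
    rw [← inner_self_eq_norm_sq (𝕜 := ℂ), ← inner_self_eq_norm_sq (𝕜 := ℂ), h1]
  have := norm_nonneg (BB Q hQ x)
  have := norm_nonneg (AA Q hQ x)
  nlinarith

/-- `B` as a map out of `Hp`. -/
noncomputable def BBp (Q : ℤ → H →L[ℂ] H) (hQ : ToepPos Q) : Hp Q hQ →L[ℂ] H :=
  LinearMap.mkContinuous
    { toFun := fun x => BB Q hQ x.toH
      map_add' := fun x y => map_add _ _ _
      map_smul' := fun c x => map_smul _ _ _ }
    1 (fun x => by
        show ‖BB Q hQ x.toH‖ ≤ 1 * ‖x‖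
        rw [norm_BB, Hp.norm_def, one_mul])

/-- The isometry from the abstract defect space into `H`. -/
noncomputable def beta (Q : ℤ → H →L[ℂ] H) (hQ : ToepPos Q) : M Q hQ →L[ℂ] H :=
  extendCLM (BBp Q hQ)

lemma beta_mkM (x : Hp Q hQ) : beta Q hQ (mkM Q hQ x) = BB Q hQ x.toH :=
  extendCLM_coe (BBp Q hQ) x

lemma norm_beta (z : M Q hQ) : ‖beta Q hQ z‖ = ‖z‖ := by
  have h := DenseRange.equalizer (denseRange_mkM (Q := Q) (hQ := hQ))
    (continuous_norm.comp (beta Q hQ).continuous) continuous_norm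
    (funext fun x => by
      show ‖beta Q hQ (mkM Q hQ x)‖ = ‖mkM Q hQ x‖
      rw [beta_mkM, norm_mkM, norm_BB, Hp.norm_def])
  exact congrFun h z

/-- `beta` as a linear isometry. -/
noncomputable def betaIso (Q : ℤ → H →L[ℂ] H) (hQ : ToepPos Q) : M Q hQ →ₗᵢ[ℂ] H :=
  ⟨(beta Q hQ).toLinearMap, norm_beta⟩

lemma inner_beta (x y : M Q hQ) : ⟪beta Q hQ x, beta Q hQ y⟫_ℂ = ⟪x, y⟫_ℂ :=
  (betaIso Q hQ).inner_map_map x y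

/-- The stationary Cholesky coefficients. -/
noncomputable def Ff (Q : ℤ → H →L[ℂ] H) (hQ : ToepPos Q) (r : ℕ) : H →L[ℂ] H :=
  (beta Q hQ) ∘L (ContinuousLinearMap.adjoint (alpha Q hQ)) ∘L (G Q hQ r)

lemma inner_Ff (r s : ℕ) (x y : H) :
    ⟪Ff Q hQ r x, Ff Q hQ s y⟫_ℂ = ⟪G Q hQ r x, G Q hQ s y⟫_ℂ := by
  unfold Ff
  simp only [ContinuousLinearMap.comp_apply]
  rw [inner_beta, ContinuousLinearMap.adjoint_inner_left]
  have : alpha Q hQ (ContinuousLinearMap.adjoint (alpha Q hQ) (G Q hQ s y)) = G Q hQ s y := by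
    rw [G_apply]
    exact alpha_fix_Dd _
  rw [this]

lemma Ff_zero_apply (x : H) : Ff Q hQ 0 x = beta Q hQ (mkM Q hQ (Hp.ofH hQ x)) := by
  unfold Ff
  simp only [ContinuousLinearMap.comp_apply]
  have h1 : G Q hQ 0 x = alpha Q hQ (mkM Q hQ (Hp.ofH hQ x)) := (alpha_mkM _).symm
  rw [h1, alphaStar_mul_alpha]

lemma Ff_range (i : ℕ) :
    Set.range (Ff Q hQ i) ⊆ closure (Set.range (Ff Q hQ 0)) := by
  rintro _ ⟨x, rfl⟩
  have h1 : Ff Q hQ i x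
      = beta Q hQ (ContinuousLinearMap.adjoint (alpha Q hQ) (G Q hQ i x)) := rfl
  set z := ContinuousLinearMap.adjoint (alpha Q hQ) (G Q hQ i x) with hz
  have h2 : z ∈ closure (Set.range (mkM Q hQ)) := denseRange_mkM z
  have h3 : beta Q hQ z ∈ closure (beta Q hQ '' Set.range (mkM Q hQ)) :=
    image_closure_subset_closure_image (beta Q hQ).continuous ⟨z, h2, rfl⟩
  have h4 : beta Q hQ '' Set.range (mkM Q hQ) = Set.range (Ff Q hQ 0) := by
    ext w
    constructor
    · rintro ⟨_, ⟨y, rfl⟩, rfl⟩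
      exact ⟨y.toH, Ff_zero_apply y.toH⟩
    · rintro ⟨y, rfl⟩
      exact ⟨mkM Q hQ (Hp.ofH hQ y), ⟨_, rfl⟩, (Ff_zero_apply _).symm⟩
  rw [h1, ← h4]
  exact h3

end Mside

section QF

variable {Q : ℤ → H →L[ℂ] H} {hQ : ToepPos Q}

/-- The truncated vector in `K`. -/
noncomputable def usum (Q : ℤ → H →L[ℂ] H) (hQ : ToepPos Q) (m : ℕ) (v : ℕ → H) : K Q hQ :=
  ∑ j ∈ Finset.range (m + 1), iota Q hQ j (v j)

lemma normSq_eq_re_inner {E : Type*} [SeminormedAddCommGroup E] [InnerProductSpace ℂ E]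
    (z : E) : ‖z‖ ^ 2 = (⟪z, z⟫_ℂ).re := by
  rw [← inner_self_eq_norm_sq (𝕜 := ℂ), RCLike.re_to_complex]

lemma sum_range_ite {β : Type*} [AddCommMonoid β] {m k : ℕ} (hk : k ≤ m) (f : ℕ → β) :
    ∑ j ∈ Finset.range (m + 1), (if j ≤ k then f j else 0)
      = ∑ j ∈ Finset.range (k + 1), f j := by
  rw [← Finset.sum_subset (Finset.range_subset_range.2 (by omega : k + 1 ≤ m + 1))
    (fun j _ hj => by
      rw [if_neg]
      simp only [Finset.mem_range] at hj
      omega)]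
  refine Finset.sum_congr rfl fun j hj => ?_
  rw [if_pos]
  simp only [Finset.mem_range] at hj
  omega

lemma Dd_Wpow_usum {m k : ℕ} (hk : k ≤ m) (v : ℕ → H) :
    Dd Q hQ ((W Q hQ ^ k) (usum Q hQ m v))
      = ∑ j ∈ Finset.range (k + 1), G Q hQ (k - j) (v j) := by
  unfold usum
  rw [map_sum, map_sum]
  have : ∀ j ∈ Finset.range (m + 1),
      Dd Q hQ ((W Q hQ ^ k) (iota Q hQ j (v j)))
        = if j ≤ k then G Q hQ (k - j) (v j) else 0 :=
    fun j _ => Dd_Wpow_iota k j (v j)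
  rw [Finset.sum_congr rfl this, sum_range_ite hk]

lemma sumG_normSq (m : ℕ) (v : ℕ → H) :
    ∑ k ∈ Finset.range (m + 1), ‖∑ j ∈ Finset.range (k + 1), G Q hQ (k - j) (v j)‖ ^ 2
      = ‖usum Q hQ m v‖ ^ 2 - ‖(W Q hQ ^ (m + 1)) (usum Q hQ m v)‖ ^ 2 := by
  rw [← telescope]
  refine Finset.sum_congr rfl fun k hk => ?_
  rw [Dd_Wpow_usum (by simp only [Finset.mem_range] at hk; omega) v]

lemma toepQF_eq_normSq (N : ℕ) (v : ℕ → H) :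
    toepQF Q N v = ‖∑ j ∈ Finset.range N, iota Q hQ j (v j)‖ ^ 2 := by
  rw [normSq_eq_re_inner, sum_inner]
  rw [Complex.re_sum]
  unfold toepQF
  rw [Finset.sum_comm]
  refine Finset.sum_congr rfl fun j _ => ?_
  rw [inner_sum, Complex.re_sum]
  refine Finset.sum_congr rfl fun i _ => ?_
  rw [inner_iota]

/-- The candidate Schur complement matrix. -/
noncomputable def Smat (Q : ℤ → H →L[ℂ] H) (hQ : ToepPos Q) (m : ℕ) :
    ℕ → ℕ → H →L[ℂ] H := fun i j =>
  if i ≤ m ∧ j ≤ m then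
    ∑ k ∈ Finset.Icc (max i j) m,
      (ContinuousLinearMap.adjoint (Ff Q hQ (k - i))) ∘L (Ff Q hQ (k - j))
  else 0

lemma Smat_entry_re {m i j : ℕ} (hi : i ≤ m) (hj : j ≤ m) (v : ℕ → H) :
    (⟪Smat Q hQ m i j (v j), v i⟫_ℂ).re
      = ∑ k ∈ Finset.range (m + 1),
          if i ≤ k ∧ j ≤ k then (⟪G Q hQ (k - j) (v j), G Q hQ (k - i) (v i)⟫_ℂ).re else 0 := by
  have hIcc : Finset.Icc (max i j) m
      = (Finset.range (m + 1)).filter (fun k => i ≤ k ∧ j ≤ k) := by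
    ext k
    simp only [Finset.mem_Icc, Finset.mem_filter, Finset.mem_range]
    omega
  unfold Smat
  rw [if_pos ⟨hi, hj⟩, ContinuousLinearMap.sum_apply, sum_inner, hIcc, Finset.sum_filter,
    Complex.re_sum]
  refine Finset.sum_congr rfl fun k _ => ?_
  by_cases hk : i ≤ k ∧ j ≤ k
  · rw [if_pos hk, if_pos hk, ContinuousLinearMap.comp_apply,
      ContinuousLinearMap.adjoint_inner_left, inner_Ff]
  · rw [if_neg hk, if_neg hk]
    simp

lemma schurQF_Smat (m : ℕ) (v : ℕ → H) :
    schurQF m (Smat Q hQ m) v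
      = ∑ k ∈ Finset.range (m + 1), ‖∑ j ∈ Finset.range (k + 1), G Q hQ (k - j) (v j)‖ ^ 2 := by
  unfold schurQF
  have h1 : ∀ i ∈ Finset.range (m + 1), ∀ j ∈ Finset.range (m + 1),
      (⟪Smat Q hQ m i j (v j), v i⟫_ℂ).re
        = ∑ k ∈ Finset.range (m + 1),
            if i ≤ k ∧ j ≤ k then (⟪G Q hQ (k - j) (v j), G Q hQ (k - i) (v i)⟫_ℂ).re else 0 := by
    intro i hi j hj
    simp only [Finset.mem_range] at hi hj
    exact Smat_entry_re (by omega) (by omega) v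
  calc ∑ i ∈ Finset.range (m + 1), ∑ j ∈ Finset.range (m + 1), (⟪Smat Q hQ m i j (v j), v i⟫_ℂ).re
      = ∑ i ∈ Finset.range (m + 1), ∑ j ∈ Finset.range (m + 1), ∑ k ∈ Finset.range (m + 1),
          (if i ≤ k ∧ j ≤ k then (⟪G Q hQ (k - j) (v j), G Q hQ (k - i) (v i)⟫_ℂ).re else 0) := by
        refine Finset.sum_congr rfl fun i hi => Finset.sum_congr rfl fun j hj => h1 i hi j hj
    _ = ∑ i ∈ Finset.range (m + 1), ∑ k ∈ Finset.range (m + 1), ∑ j ∈ Finset.range (m + 1),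
          (if i ≤ k ∧ j ≤ k then (⟪G Q hQ (k - j) (v j), G Q hQ (k - i) (v i)⟫_ℂ).re else 0) :=
        Finset.sum_congr rfl fun i _ => Finset.sum_comm
    _ = ∑ k ∈ Finset.range (m + 1), ∑ i ∈ Finset.range (m + 1), ∑ j ∈ Finset.range (m + 1),
          (if i ≤ k ∧ j ≤ k then (⟪G Q hQ (k - j) (v j), G Q hQ (k - i) (v i)⟫_ℂ).re else 0) :=
        Finset.sum_comm
    _ = ∑ k ∈ Finset.range (m + 1), ‖∑ j ∈ Finset.range (k + 1), G Q hQ (k - j) (v j)‖ ^ 2 := by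
        refine Finset.sum_congr rfl fun k hk => ?_
        simp only [Finset.mem_range] at hk
        have hkm : k ≤ m := by omega
        have h2 : ∀ i j : ℕ, (if i ≤ k ∧ j ≤ k
            then (⟪G Q hQ (k - j) (v j), G Q hQ (k - i) (v i)⟫_ℂ).re else 0)
            = if i ≤ k then (if j ≤ k
              then (⟪G Q hQ (k - j) (v j), G Q hQ (k - i) (v i)⟫_ℂ).re else 0) else 0 := by
          intro i j
          by_cases h : i ≤ k
          · by_cases h' : j ≤ k
            · rw [if_pos ⟨h, h'⟩, if_pos h, if_pos h']
            · rw [if_neg (by tauto), if_pos h, if_neg h']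
          · rw [if_neg (by tauto), if_neg h]
        calc ∑ i ∈ Finset.range (m + 1), ∑ j ∈ Finset.range (m + 1),
              (if i ≤ k ∧ j ≤ k then (⟪G Q hQ (k - j) (v j), G Q hQ (k - i) (v i)⟫_ℂ).re else 0)
            = ∑ i ∈ Finset.range (m + 1), (if i ≤ k then ∑ j ∈ Finset.range (m + 1), (if j ≤ k
                then (⟪G Q hQ (k - j) (v j), G Q hQ (k - i) (v i)⟫_ℂ).re else 0) else 0) := by
              refine Finset.sum_congr rfl fun i _ => ?_
              rw [Finset.sum_congr rfl fun j _ => h2 i j]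
              by_cases h : i ≤ k
              · rw [if_pos h]
                exact Finset.sum_congr rfl fun j _ => by rw [if_pos h]
              · rw [if_neg h]
                exact Finset.sum_eq_zero fun j _ => by rw [if_neg h]
          _ = ∑ i ∈ Finset.range (k + 1), ∑ j ∈ Finset.range (k + 1),
                (⟪G Q hQ (k - j) (v j), G Q hQ (k - i) (v i)⟫_ℂ).re := by
              rw [sum_range_ite hkm]
              exact Finset.sum_congr rfl fun i _ => sum_range_ite hkm _
          _ = ‖∑ j ∈ Finset.range (k + 1), G Q hQ (k - j) (v j)‖ ^ 2 := by
              rw [normSq_eq_re_inner, sum_inner, Complex.re_sum, Finset.sum_comm]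
              refine Finset.sum_congr rfl fun i _ => ?_
              rw [inner_sum, Complex.re_sum]

lemma schurQF_Smat_norm (m : ℕ) (v : ℕ → H) :
    schurQF m (Smat Q hQ m) v
      = ‖usum Q hQ m v‖ ^ 2 - ‖(W Q hQ ^ (m + 1)) (usum Q hQ m v)‖ ^ 2 := by
  rw [schurQF_Smat, sumG_normSq]

lemma schurQF_Smat_nonneg (m : ℕ) (v : ℕ → H) : 0 ≤ schurQF m (Smat Q hQ m) v := by
  rw [schurQF_Smat]
  exact Finset.sum_nonneg fun k _ => sq_nonneg _

end QF

section Main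

variable {Q : ℤ → H →L[ℂ] H} {hQ : ToepPos Q}

lemma Vpow_adjoint (k : ℕ) :
    ContinuousLinearMap.adjoint (V Q hQ ^ k) = W Q hQ ^ k := by
  rw [← ContinuousLinearMap.star_eq_adjoint, star_pow, ContinuousLinearMap.star_eq_adjoint]
  rfl

lemma iota_add_pow (p i : ℕ) (x : H) :
    iota Q hQ (p + i) x = (V Q hQ ^ p) (iota Q hQ i x) := by
  rw [iota_eq_pow, iota_eq_pow i, pow_add, ContinuousLinearMap.mul_apply]

lemma norm_split {m N : ℕ} (hN : m + 1 ≤ N) (v : ℕ → H) :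
    ‖∑ j ∈ Finset.range N, iota Q hQ j (v j)‖ ^ 2
      = ‖usum Q hQ m v‖ ^ 2 - ‖(W Q hQ ^ (m + 1)) (usum Q hQ m v)‖ ^ 2
        + ‖(W Q hQ ^ (m + 1)) (usum Q hQ m v)
            + ∑ i ∈ Finset.range (N - (m + 1)), iota Q hQ i (v (m + 1 + i))‖ ^ 2 := by
  set u := usum Q hQ m v with hu
  set y := ∑ i ∈ Finset.range (N - (m + 1)), iota Q hQ i (v (m + 1 + i)) with hy
  set t := (W Q hQ ^ (m + 1)) u with ht
  have hsplit : ∑ j ∈ Finset.range N, iota Q hQ j (v j) = u + (V Q hQ ^ (m + 1)) y := by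
    have h1 : ∑ j ∈ Finset.range N, iota Q hQ j (v j)
        = ∑ j ∈ Finset.range (m + 1), iota Q hQ j (v j)
          + ∑ j ∈ Finset.Ico (m + 1) N, iota Q hQ j (v j) := by
      rw [Finset.range_eq_Ico, Finset.range_eq_Ico]
      exact (Finset.sum_Ico_consecutive (fun j => iota Q hQ j (v j)) (by omega : 0 ≤ m + 1) hN).symm
    have h2 : ∑ j ∈ Finset.Ico (m + 1) N, iota Q hQ j (v j) = (V Q hQ ^ (m + 1)) y := by
      rw [Finset.sum_Ico_eq_sum_range, hy, map_sum]
      exact Finset.sum_congr rfl fun i _ => iota_add_pow (m + 1) i (v (m + 1 + i))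
    rw [h1, h2, hu]
    rfl
  rw [hsplit, norm_add_sq (𝕜 := ℂ), norm_add_sq (𝕜 := ℂ)]
  have h3 : ⟪u, (V Q hQ ^ (m + 1)) y⟫_ℂ = ⟪t, y⟫_ℂ := by
    rw [ht, ← Vpow_adjoint (m + 1), ContinuousLinearMap.adjoint_inner_left]
  have h4 : ‖(V Q hQ ^ (m + 1)) y‖ = ‖y‖ := norm_Vpow_apply _ _
  rw [h3, h4]
  ring

lemma usum_congr {m : ℕ} {v v' : ℕ → H} (h : ∀ k, k ≤ m → v k = v' k) :
    usum Q hQ m v = usum Q hQ m v' := by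
  unfold usum
  refine Finset.sum_congr rfl fun j hj => ?_
  simp only [Finset.mem_range] at hj
  rw [h j (by omega)]

lemma part_le (m : ℕ) : ∀ N (v : ℕ → H), (∀ k, N ≤ k → v k = 0) →
    schurQF m (Smat Q hQ m) v ≤ toepQF Q N v := by
  intro N v hv
  rw [schurQF_Smat_norm, toepQF_eq_normSq (hQ := hQ)]
  by_cases hN : m + 1 ≤ N
  · rw [norm_split hN v]
    have := sq_nonneg ‖(W Q hQ ^ (m + 1)) (usum Q hQ m v)
      + ∑ i ∈ Finset.range (N - (m + 1)), iota Q hQ i (v (m + 1 + i))‖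
    linarith
  · have he : ∑ j ∈ Finset.range N, iota Q hQ j (v j) = usum Q hQ m v := by
      unfold usum
      refine Finset.sum_subset (Finset.range_subset_range.2 (by omega)) fun j _ hj => ?_
      simp only [Finset.mem_range] at hj
      rw [hv j (by omega), map_zero]
    rw [he]
    have := sq_nonneg ‖(W Q hQ ^ (m + 1)) (usum Q hQ m v)‖
    linarith

lemma schurQF_congr {m : ℕ} (X : ℕ → ℕ → H →L[ℂ] H) {v v' : ℕ → H}
    (h : ∀ k, k ≤ m → v k = v' k) : schurQF m X v = schurQF m X v' := by
  unfold schurQF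
  refine Finset.sum_congr rfl fun i hi => Finset.sum_congr rfl fun j hj => ?_
  simp only [Finset.mem_range] at hi hj
  rw [h i (by omega), h j (by omega)]

lemma part_max (m : ℕ) (X : ℕ → ℕ → H →L[ℂ] H)
    (hle : ∀ N (v : ℕ → H), (∀ k, N ≤ k → v k = 0) → schurQF m X v ≤ toepQF Q N v)
    (v : ℕ → H) : schurQF m X v ≤ schurQF m (Smat Q hQ m) v := by
  refine le_of_forall_pos_le_add fun ε hε => ?_
  set u := usum Q hQ m v with hu
  set t := (W Q hQ ^ (m + 1)) u with ht
  obtain ⟨u₀, hu₀⟩ := (denseRange_mkK (Q := Q) (hQ := hQ)).exists_dist_lt (-t)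
    (Real.sqrt_pos.2 hε)
  set e := u₀.toF with he
  set N₀ := m + 1 + bnd e with hN₀
  set v'' : ℕ → H := fun k => if k ≤ m then v k else e (k - (m + 1)) with hv''
  have hbdd : ∀ k, N₀ ≤ k → v'' k = 0 := by
    intro k hk
    rw [hv'']
    simp only
    rw [if_neg (by omega)]
    exact bdd_bnd e (k - (m + 1)) (by omega)
  have hX : schurQF m X v = schurQF m X v'' := by
    refine schurQF_congr X fun k hk => ?_
    rw [hv'']
    simp only
    rw [if_pos hk]
  have husum : usum Q hQ m v'' = u := by
    rw [hu]
    refine usum_congr fun k hk => ?_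
    rw [hv'']
    simp only
    rw [if_pos hk]
  have hy : ∑ i ∈ Finset.range (N₀ - (m + 1)), iota Q hQ i (v'' (m + 1 + i))
      = mkK Q hQ u₀ := by
    have hN' : N₀ - (m + 1) = bnd e := by omega
    have hmkk : mkK Q hQ u₀ = mkK Q hQ (PreE.ofF hQ e) := rfl
    rw [hN', hmkk, mkK_eq_sum (bdd_bnd e)]
    refine Finset.sum_congr rfl fun i _ => ?_
    congr 1
    rw [hv'']
    simp only
    rw [if_neg (by omega)]
    congr 1
    omega
  have hts : toepQF Q N₀ v'' = ‖u‖ ^ 2 - ‖t‖ ^ 2 + ‖t + mkK Q hQ u₀‖ ^ 2 := by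
    rw [toepQF_eq_normSq (hQ := hQ), norm_split (by omega : m + 1 ≤ N₀) v'', husum, hy, ← ht]
  have hdist : ‖t + mkK Q hQ u₀‖ < Real.sqrt ε := by
    have : dist (-t) (mkK Q hQ u₀) = ‖t + mkK Q hQ u₀‖ := by
      rw [dist_eq_norm]
      rw [show -t - mkK Q hQ u₀ = -(t + mkK Q hQ u₀) by abel, norm_neg]
    rw [← this]
    exact hu₀
  have hfin : schurQF m X v ≤ ‖u‖ ^ 2 - ‖t‖ ^ 2 + ε := by
    have h1 := hle N₀ v'' hbdd
    rw [← hX, hts] at h1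
    have h2 : ‖t + mkK Q hQ u₀‖ ^ 2 ≤ ε := by
      have hnn := norm_nonneg (t + mkK Q hQ u₀)
      have hsq := Real.sq_sqrt (le_of_lt hε)
      nlinarith
    linarith
  rw [schurQF_Smat_norm, ← hu, ← ht]
  linarith

lemma part_supp (m : ℕ) : ∀ i j, m < i ∨ m < j → Smat Q hQ m i j = 0 := by
  intro i j hij
  unfold Smat
  rw [if_neg (by omega)]

lemma part_adj (m : ℕ) : ∀ i j,
    ContinuousLinearMap.adjoint (Smat Q hQ m i j) = Smat Q hQ m j i := by
  intro i j
  unfold Smat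
  by_cases h : i ≤ m ∧ j ≤ m
  · rw [if_pos h, if_pos ⟨h.2, h.1⟩, map_sum]
    rw [max_comm j i]
    refine Finset.sum_congr rfl fun k _ => ?_
    rw [ContinuousLinearMap.adjoint_comp, ContinuousLinearMap.adjoint_adjoint]
  · rw [if_neg h, if_neg (by tauto), map_zero]

end Main

end SchurCholesky

/-- Stationary UL Cholesky decomposition of the Schur complements of a positive
Toeplitz operator: there exist `F_0, F_1, …` with `ran F_i ⊆ closure (ran F_0)` such
that `S(m) = L_m* L_m`, where `L_m` is the lower triangular Toeplitz matrix with
symbol `F_0 + F_1 z + ⋯ + F_m z^m`; entrywise `(L_m* L_m)_{ij} =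
∑_{k = max(i,j)}^{m} F_{k-i}* F_{k-j}`. -/
theorem schur_toeplitz_stationary_cholesky (Q : ℤ → H →L[ℂ] H) (hQ : ToepPos Q) :
    ∃ F : ℕ → H →L[ℂ] H,
      (∀ i, Set.range (F i) ⊆ closure (Set.range (F 0))) ∧
      ∀ m : ℕ, IsSchurToep Q m
        (fun i j => if i ≤ m ∧ j ≤ m then
          ∑ k ∈ Finset.Icc (max i j) m, (F (k - i)).adjoint ∘L (F (k - j))
        else 0) := by
  refine ⟨SchurCholesky.Ff Q hQ, SchurCholesky.Ff_range, fun m => ?_⟩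
  have hS : (fun i j => if i ≤ m ∧ j ≤ m then
      ∑ k ∈ Finset.Icc (max i j) m,
        (SchurCholesky.Ff Q hQ (k - i)).adjoint ∘L (SchurCholesky.Ff Q hQ (k - j))
    else 0) = SchurCholesky.Smat Q hQ m := rfl
  rw [hS]
  exact ⟨SchurCholesky.part_supp m, SchurCholesky.part_adj m,
    fun v => SchurCholesky.schurQF_Smat_nonneg m v, SchurCholesky.part_le m,
    fun X _ _ _ hle v => SchurCholesky.part_max m X hle v⟩

end
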